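/- For every A ⊆ {1,…,n}, the Casimir operator C_A commutes with the full Laplace–Dunkl operator: [C_A, Δ_{[n]}] = 0 as operators on ℝ[x_1,…,x_n], where [n] = {1,…,n}. -/

import Mathlib

open MvPolynomial Finset

noncomputable section

variable {n : ℕ}

/-- Reflection operator `r_i`. -/
def reflOp (i : Fin n) : Module.End ℝ (MvPolynomial (Fin n) ℝ) :=
  (MvPolynomial.aeval (fun j : Fin n => if j = i then -X i else X j)).toLinearMap

/-- Division by the variable `x_i` (as a linear operator, discarding non-divisible terms). -/
def divXop (i : Fin n) : Module.End ℝ (MvPolynomial (Fin n) ℝ) where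
  toFun p := p.divMonomial (Finsupp.single i 1)
  map_add' p q := by ext m; simp [coeff_divMonomial]
  map_smul' c p := by ext m; simp [coeff_divMonomial]

/-- The `i`-th `Z_2^n` Dunkl operator `T_i = ∂_i + μ_i x_i⁻¹ (1 - r_i)`. -/
def dunklT (μ : Fin n → ℝ) (i : Fin n) : Module.End ℝ (MvPolynomial (Fin n) ℝ) :=
  (pderiv i).toLinearMap + μ i • (divXop i * (1 - reflOp i))

/-- The intermediate Laplace–Dunkl operator `Δ_A = Σ_{i∈A} T_i²`. -/
def lapD (μ : Fin n → ℝ) (A : Finset (Fin n)) : Module.End ℝ (MvPolynomial (Fin n) ℝ) :=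
  ∑ i ∈ A, dunklT μ i ^ 2

/-- Multiplication by `‖x_A‖² = Σ_{i∈A} x_i²`. -/
def mulX2 (A : Finset (Fin n)) : Module.End ℝ (MvPolynomial (Fin n) ℝ) :=
  LinearMap.mulLeft ℝ (∑ i ∈ A, X i ^ 2)

/-- The Euler operator `E_A = Σ_{i∈A} x_i ∂_i`. -/
def eulerOp (A : Finset (Fin n)) : Module.End ℝ (MvPolynomial (Fin n) ℝ) :=
  ∑ i ∈ A, LinearMap.mulLeft ℝ (X i) * (pderiv i).toLinearMap

/-- `γ_A = |A|/2 + Σ_{i∈A} μ_i`. -/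
def gamA (μ : Fin n → ℝ) (A : Finset (Fin n)) : ℝ :=
  (A.card : ℝ) / 2 + ∑ i ∈ A, μ i

/-- The Casimir operator `C_A`. -/
def casOp (μ : Fin n → ℝ) (A : Finset (Fin n)) : Module.End ℝ (MvPolynomial (Fin n) ℝ) :=
  (1 / 4 : ℝ) • ((eulerOp A + gamA μ A • 1) ^ 2 - (2 : ℝ) • (eulerOp A + gamA μ A • 1)
    - mulX2 A * lapD μ A)

end

/-! ### Auxiliary material for the proof -/

noncomputable section AuxProof

variable {n : ℕ}

lemma reflOp_monomial (i : Fin n) (m : Fin n →₀ ℕ) :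
    reflOp i (monomial m 1) = ((-1:ℝ)^(m i)) • monomial m 1 := by
  simp only [reflOp, AlgHom.toLinearMap_apply, aeval_monomial, map_one, one_mul]
  rw [Finsupp.prod]
  have h : ∀ j ∈ m.support, (if j = i then -X i else X j : MvPolynomial (Fin n) ℝ) ^ m j
      = (-1 : MvPolynomial (Fin n) ℝ)^(if j = i then m j else 0) * X j ^ m j := by
    intro j _
    by_cases hj : j = i
    · subst hj; rw [if_pos rfl, if_pos rfl, neg_pow]
    · simp [hj]
  rw [Finset.prod_congr rfl h, Finset.prod_mul_distrib, Finset.prod_pow_eq_pow_sum,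
    Finset.sum_ite_eq' m.support i m]
  have h2 : (if i ∈ m.support then m i else 0) = m i := by
    split
    · rfl
    · rw [eq_comm, ← Finsupp.notMem_support_iff]; assumption
  rw [h2, smul_eq_C_mul, map_pow, map_neg, map_one]
  congr 1
  rw [monomial_eq, map_one, one_mul, Finsupp.prod]

lemma divXop_monomial (i : Fin n) (m : Fin n →₀ ℕ) (a : ℝ) :
    divXop i (monomial m a) = if m i = 0 then 0 else monomial (m - Finsupp.single i 1) a := by
  have hd : divXop i (monomial m a) = (monomial m a).divMonomial (Finsupp.single i 1) := rfl
  ext k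
  rw [hd, coeff_divMonomial]
  by_cases h : m i = 0
  · rw [if_pos h, coeff_monomial, coeff_zero, if_neg]
    intro he
    rw [he] at h
    simp at h
  · rw [if_neg h, coeff_monomial, coeff_monomial]
    congr 1
    apply propext
    constructor <;> intro he
    · rw [he]; ext j; simp [Finsupp.tsub_apply, Finsupp.single_apply, add_comm]
    · rw [← he]
      have hle : Finsupp.single i 1 ≤ m := Finsupp.single_le_iff.mpr (Nat.one_le_iff_ne_zero.mpr h)
      ext j
      simp only [Finsupp.add_apply, Finsupp.tsub_apply]
      rcases eq_or_ne j i with rfl | hji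
      · simp [Finsupp.single_apply]
        have h1 := Nat.one_le_iff_ne_zero.mpr h
        omega
      · simp [Finsupp.single_apply, hji.symm, Ne.symm hji]

/-- eigen-coefficient of `T_i` on a monomial of degree `k` in `x_i`. -/
def cc (μ : ℝ) (k : ℕ) : ℝ := (k : ℝ) + μ * (1 - (-1)^k)
/-- eigen-coefficient of `T_i²`. -/
def bb (μ : ℝ) (k : ℕ) : ℝ := cc μ k * cc μ (k - 1)

lemma cc_zero (μ : ℝ) : cc μ 0 = 0 := by simp [cc]
lemma bb_zero (μ : ℝ) : bb μ 0 = 0 := by simp [bb, cc_zero]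
lemma bb_one (μ : ℝ) : bb μ 1 = 0 := by simp [bb, cc_zero]
lemma bb_add_two (μ : ℝ) (k : ℕ) : bb μ (k+2) = bb μ k + 4*(k:ℝ) + 2 + 4*μ := by
  match k with
  | 0 => simp [bb, cc]; ring
  | 1 => simp [bb, cc]; norm_num; ring
  | (j+2) =>
    show cc μ (j+4) * cc μ (j+4-1) = cc μ (j+2) * cc μ (j+2-1) + _ + _ + _
    have h4 : j+4-1 = j+3 := rfl
    have h2 : j+2-1 = j+1 := rfl
    rw [h4, h2]
    simp only [cc, pow_add, pow_succ, Nat.cast_add]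
    push_cast
    ring

lemma dunklT_monomial (μ : Fin n → ℝ) (i : Fin n) (m : Fin n →₀ ℕ) :
    dunklT μ i (monomial m 1)
      = cc (μ i) (m i) • monomial (m - Finsupp.single i 1) 1 := by
  simp only [dunklT, LinearMap.add_apply, LinearMap.smul_apply, Module.End.mul_apply,
    Derivation.coeFn_coe, LinearMap.sub_apply, Module.End.one_apply,
    pderiv_monomial, reflOp_monomial, one_mul]
  rw [smul_monomial, show (monomial m (1:ℝ) : MvPolynomial (Fin n) ℝ) - monomial m ((-1:ℝ)^(m i) • 1)
      = monomial m (1 - (-1:ℝ)^(m i)) by rw [smul_eq_mul, mul_one, ← map_sub],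
    divXop_monomial]
  by_cases h : m i = 0
  · rw [if_pos h, h, cc_zero, zero_smul, smul_zero, add_zero]
    simp
  · rw [if_neg h, cc]
    rw [smul_monomial, smul_eq_mul, ← map_add, smul_monomial, smul_eq_mul, mul_one]

lemma dunklT_sq_monomial (μ : Fin n → ℝ) (i : Fin n) (m : Fin n →₀ ℕ) :
    (dunklT μ i ^ 2) (monomial m 1)
      = bb (μ i) (m i) • monomial (m - Finsupp.single i 2) 1 := by
  rw [pow_two, Module.End.mul_apply, dunklT_monomial, map_smul, dunklT_monomial]
  rw [smul_smul, Finsupp.tsub_apply, Finsupp.single_eq_same]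
  rw [tsub_tsub, ← Finsupp.single_add]
  rfl

lemma end_ext {f g : Module.End ℝ (MvPolynomial (Fin n) ℝ)}
    (h : ∀ m : Fin n →₀ ℕ, f (monomial m 1) = g (monomial m 1)) : f = g := by
  apply LinearMap.ext
  intro p
  induction p using MvPolynomial.induction_on' with
  | monomial m a =>
    have e : (monomial m a : MvPolynomial (Fin n) ℝ) = a • monomial m 1 := by
      rw [smul_monomial, smul_eq_mul, mul_one]
    rw [e, map_smul, map_smul, h]
  | add p q hp hq => rw [map_add, map_add, hp, hq]

lemma sub_apply_ne (m : Fin n →₀ ℕ) {i j : Fin n} (hij : i ≠ j) (c : ℕ) :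
    (m - Finsupp.single i c) j = m j := by
  rw [Finsupp.tsub_apply, Finsupp.single_apply, if_neg hij]; rfl

lemma add_apply_ne (m : Fin n →₀ ℕ) {i j : Fin n} (hij : i ≠ j) (c : ℕ) :
    (m + Finsupp.single i c) j = m j := by
  rw [Finsupp.add_apply, Finsupp.single_apply, if_neg hij]; rfl

lemma sub_sub_comm (m : Fin n →₀ ℕ) (i j : Fin n) (c d : ℕ) :
    m - Finsupp.single i c - Finsupp.single j d
      = m - Finsupp.single j d - Finsupp.single i c := by
  rw [tsub_tsub, tsub_tsub, add_comm]

lemma add_sub_of_ne (m : Fin n →₀ ℕ) {i j : Fin n} (hij : i ≠ j) (c d : ℕ) :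
    m + Finsupp.single i c - Finsupp.single j d
      = m - Finsupp.single j d + Finsupp.single i c := by
  ext k
  simp only [Finsupp.add_apply, Finsupp.tsub_apply, Finsupp.single_apply]
  split_ifs with h1 h2
  · exact absurd (h1.trans h2.symm) hij
  · omega
  · omega
  · omega

lemma addSub_cancel (m : Fin n →₀ ℕ) (i : Fin n) (c : ℕ) :
    m + Finsupp.single i c - Finsupp.single i c = m := add_tsub_cancel_right m _

lemma subAdd_cancel (m : Fin n →₀ ℕ) (i : Fin n) {c : ℕ} (h : c ≤ m i) :
    m - Finsupp.single i c + Finsupp.single i c = m :=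
  tsub_add_cancel_of_le (Finsupp.single_le_iff.mpr h)

/-- The Euler block `x_i ∂_i`. -/
def eulB (i : Fin n) : Module.End ℝ (MvPolynomial (Fin n) ℝ) :=
  LinearMap.mulLeft ℝ (X i) * (pderiv i).toLinearMap

lemma eulB_monomial (i : Fin n) (m : Fin n →₀ ℕ) :
    eulB i (monomial m 1) = (m i : ℝ) • monomial m 1 := by
  rw [eulB, Module.End.mul_apply]
  simp only [Derivation.coeFn_coe, pderiv_monomial, one_mul]
  rw [LinearMap.mulLeft_apply, X, monomial_mul, one_mul]
  rcases Nat.eq_zero_or_pos (m i) with h | h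
  · simp [h]
  · rw [show Finsupp.single i 1 + (m - Finsupp.single i 1) = m from by
      rw [add_comm]; exact subAdd_cancel m i h]
    rw [smul_monomial, smul_eq_mul, mul_one]

lemma mulXsq_monomial (i : Fin n) (m : Fin n →₀ ℕ) :
    (LinearMap.mulLeft ℝ (X i ^ 2) : Module.End ℝ (MvPolynomial (Fin n) ℝ)) (monomial m 1)
      = monomial (m + Finsupp.single i 2) 1 := by
  rw [LinearMap.mulLeft_apply, X_pow_eq_monomial, monomial_mul, one_mul, add_comm]

/-! Pairwise commutation relations -/

lemma Tsq_comm_Tsq (μ : Fin n → ℝ) {i j : Fin n} (hij : i ≠ j) :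
    Commute (dunklT μ i ^ 2) (dunklT μ j ^ 2) := by
  apply end_ext
  intro m
  rw [Module.End.mul_apply, Module.End.mul_apply, dunklT_sq_monomial, map_smul,
    dunklT_sq_monomial, dunklT_sq_monomial, map_smul, dunklT_sq_monomial]
  rw [smul_smul, smul_smul, sub_apply_ne m hij.symm, sub_apply_ne m hij,
    mul_comm, sub_sub_comm]

lemma Tsq_comm_eulB (μ : Fin n → ℝ) {i j : Fin n} (hij : i ≠ j) :
    Commute (dunklT μ j ^ 2) (eulB i) := by
  apply end_ext
  intro m
  simp only [Module.End.mul_apply, eulB_monomial, map_smul, dunklT_sq_monomial, smul_smul]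
  rw [sub_apply_ne m hij.symm, mul_comm]

lemma Tsq_comm_mulXsq (μ : Fin n → ℝ) {i j : Fin n} (hij : i ≠ j) :
    Commute (dunklT μ j ^ 2) (LinearMap.mulLeft ℝ (X i ^ 2)) := by
  apply end_ext
  intro m
  rw [Module.End.mul_apply, Module.End.mul_apply, mulXsq_monomial, dunklT_sq_monomial,
    dunklT_sq_monomial, map_smul, mulXsq_monomial]
  rw [add_apply_ne m hij, add_sub_of_ne m hij]

lemma eulB_Tsq_same (μ : Fin n → ℝ) (i : Fin n) :
    eulB i * dunklT μ i ^ 2 = dunklT μ i ^ 2 * eulB i - (2:ℝ) • (dunklT μ i ^ 2) := by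
  apply end_ext
  intro m
  rw [LinearMap.sub_apply, LinearMap.smul_apply, Module.End.mul_apply, Module.End.mul_apply,
    dunklT_sq_monomial, map_smul, eulB_monomial, eulB_monomial, map_smul, dunklT_sq_monomial]
  rw [smul_smul, smul_smul, smul_smul, Finsupp.tsub_apply, Finsupp.single_eq_same, ← sub_smul]
  congr 1
  match h : m i with
  | 0 => simp [bb_zero]
  | 1 => simp [bb_one]
  | (k+2) =>
    push_cast [show k+2-2 = k from rfl]
    ring

lemma Tsq_mulXsq_same (μ : Fin n → ℝ) (i : Fin n) :
    dunklT μ i ^ 2 * LinearMap.mulLeft ℝ (X i ^ 2)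
      = LinearMap.mulLeft ℝ (X i ^ 2) * dunklT μ i ^ 2
        + (4:ℝ) • eulB i + ((2:ℝ) + 4 * μ i) • 1 := by
  apply end_ext
  intro m
  simp only [LinearMap.add_apply, LinearMap.smul_apply, Module.End.one_apply,
    Module.End.mul_apply, mulXsq_monomial, dunklT_sq_monomial, map_smul, eulB_monomial,
    Finsupp.add_apply, Finsupp.single_eq_same, addSub_cancel, smul_smul]
  rw [bb_add_two]
  match h : m i with
  | 0 =>
    rw [bb_zero]
    push_cast
    module
  | 1 =>
    rw [bb_one]
    push_cast
    module
  | (k+2) =>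
    rw [subAdd_cancel m i (by omega)]
    push_cast
    module

end AuxProof

noncomputable section Assemble

variable {n : ℕ}

lemma two_smul_end (f : Module.End ℝ (MvPolynomial (Fin n) ℝ)) : (2:ℝ) • f = 2 * f := by
  rw [show (2:ℝ) = ((2:ℕ):ℝ) by norm_num, Nat.cast_smul_eq_nsmul, nsmul_eq_mul, Nat.cast_ofNat]

lemma four_smul_end (f : Module.End ℝ (MvPolynomial (Fin n) ℝ)) : (4:ℝ) • f = 4 * f := by
  rw [show (4:ℝ) = ((4:ℕ):ℝ) by norm_num, Nat.cast_smul_eq_nsmul, nsmul_eq_mul, Nat.cast_ofNat]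

lemma eulerOp_eq (A : Finset (Fin n)) : eulerOp A = ∑ i ∈ A, eulB i := rfl

lemma mulX2_eq (A : Finset (Fin n)) :
    mulX2 A = ∑ i ∈ A, LinearMap.mulLeft ℝ (X i ^ 2) := by
  apply LinearMap.ext; intro p
  simp [mulX2, LinearMap.sum_apply, LinearMap.mulLeft_apply, Finset.sum_mul]

lemma euler_lapD (μ : Fin n → ℝ) (A : Finset (Fin n)) :
    eulerOp A * lapD μ A - lapD μ A * eulerOp A = -((2:ℝ) • lapD μ A) := by
  have key : ∀ j ∈ A, (∑ i ∈ A, eulB (n := n) i) * dunklT μ j ^ 2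
      - dunklT μ j ^ 2 * (∑ i ∈ A, eulB i) = -((2:ℝ) • (dunklT μ j ^ 2)) := by
    intro j hj
    rw [Finset.sum_mul, Finset.mul_sum, ← Finset.sum_sub_distrib]
    rw [Finset.sum_eq_single_of_mem j hj]
    · rw [eulB_Tsq_same, sub_sub_cancel_left]
    · intro i hi hij
      rw [← (Tsq_comm_eulB μ hij).eq, sub_self]
  calc eulerOp A * lapD μ A - lapD μ A * eulerOp A
      = ∑ j ∈ A, ((∑ i ∈ A, eulB i) * dunklT μ j ^ 2
          - dunklT μ j ^ 2 * (∑ i ∈ A, eulB i)) := by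
        rw [eulerOp_eq, lapD, Finset.mul_sum, Finset.sum_mul, Finset.sum_sub_distrib]
    _ = ∑ j ∈ A, -((2:ℝ) • (dunklT μ j ^ 2)) := Finset.sum_congr rfl key
    _ = -((2:ℝ) • lapD μ A) := by
        rw [lapD, Finset.smul_sum, ← Finset.sum_neg_distrib]

lemma lapD_mulX2 (μ : Fin n → ℝ) (A : Finset (Fin n)) :
    lapD μ A * mulX2 A - mulX2 A * lapD μ A
      = (4:ℝ) • (eulerOp A + gamA μ A • 1) := by
  have key : ∀ i ∈ A, dunklT μ i ^ 2 * mulX2 A - mulX2 A * dunklT μ i ^ 2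
      = (4:ℝ) • eulB i + ((2:ℝ) + 4 * μ i) • (1 : Module.End ℝ (MvPolynomial (Fin n) ℝ)) := by
    intro i hi
    rw [mulX2_eq, Finset.mul_sum, Finset.sum_mul, ← Finset.sum_sub_distrib]
    rw [Finset.sum_eq_single_of_mem i hi]
    · rw [Tsq_mulXsq_same]
      abel
    · intro k hk hki
      rw [(Tsq_comm_mulXsq μ hki).eq, sub_self]
  calc lapD μ A * mulX2 A - mulX2 A * lapD μ A
      = ∑ i ∈ A, (dunklT μ i ^ 2 * mulX2 A - mulX2 A * dunklT μ i ^ 2) := by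
        rw [lapD, Finset.sum_mul, Finset.mul_sum, Finset.sum_sub_distrib]
    _ = ∑ i ∈ A, ((4:ℝ) • eulB i
          + ((2:ℝ) + 4 * μ i) • (1 : Module.End ℝ (MvPolynomial (Fin n) ℝ))) :=
        Finset.sum_congr rfl key
    _ = (4:ℝ) • (eulerOp A + gamA μ A • 1) := by
        rw [Finset.sum_add_distrib, ← Finset.smul_sum, ← Finset.sum_smul, ← eulerOp_eq,
          smul_add, smul_smul]
        congr 2
        rw [gamA, Finset.sum_add_distrib, Finset.sum_const, nsmul_eq_mul, ← Finset.mul_sum]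
        ring

lemma sl2_lemma {R : Type*} [Ring R] (H D F : R)
    (h1 : H * D = D * H - 2 * D) (h2 : D * F = F * D + 4 * H) :
    (H ^ 2 - 2 * H - F * D) * D = D * (H ^ 2 - 2 * H - F * D) := by
  have k1 : H * H * D = D * H * H - 4 * (D * H) + 4 * D := by
    rw [mul_assoc, h1, mul_sub, ← mul_assoc, h1, show H * (2 * D) = 2 * (H * D) by noncomm_ring, h1]
    noncomm_ring
  have k2 : D * (F * D) = F * (D * D) + 4 * (D * H) - 8 * D := by
    rw [← mul_assoc, h2, add_mul, mul_assoc F, mul_assoc 4, h1]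
    noncomm_ring
  have e1 : (H ^ 2 - 2 * H - F * D) * D = H * H * D - 2 * (H * D) - F * (D * D) := by
    noncomm_ring
  have e2 : D * (H ^ 2 - 2 * H - F * D) = D * H * H - 2 * (D * H) - D * (F * D) := by
    noncomm_ring
  rw [e1, e2, k1, k2, h1]
  noncomm_ring

lemma casOp_comm_Tsq (μ : Fin n → ℝ) (A : Finset (Fin n)) {j : Fin n} (hj : j ∉ A) :
    Commute (casOp μ A) (dunklT μ j ^ 2) := by
  have hne : ∀ i ∈ A, i ≠ j := fun i hi h => hj (h ▸ hi)
  have hE : Commute (dunklT μ j ^ 2) (eulerOp A) := by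
    rw [eulerOp_eq]
    exact Commute.sum_right _ _ _ (fun i hi => Tsq_comm_eulB μ (hne i hi))
  have hF : Commute (dunklT μ j ^ 2) (mulX2 A) := by
    rw [mulX2_eq]
    exact Commute.sum_right _ _ _ (fun i hi => Tsq_comm_mulXsq μ (hne i hi))
  have hD : Commute (dunklT μ j ^ 2) (lapD μ A) := by
    rw [lapD]
    exact Commute.sum_right _ _ _ (fun i hi => (Tsq_comm_Tsq μ (hne i hi)).symm)
  have hone : Commute (dunklT μ j ^ 2)
      (gamA μ A • (1 : Module.End ℝ (MvPolynomial (Fin n) ℝ))) :=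
    (Commute.one_right _).smul_right _
  have hH : Commute (dunklT μ j ^ 2) (eulerOp A + gamA μ A • 1) := hE.add_right hone
  have : Commute (dunklT μ j ^ 2) (casOp μ A) := by
    rw [casOp]
    exact (((hH.pow_right 2).sub_right (hH.smul_right _)).sub_right
      (hF.mul_right hD)).smul_right _
  exact this.symm

theorem casOp_comm_lapD_univ' (μ : Fin n → ℝ) (A : Finset (Fin n)) :
    casOp μ A * lapD μ Finset.univ - lapD μ Finset.univ * casOp μ A = 0 := by
  have hsplit : lapD μ (Finset.univ : Finset (Fin n)) = lapD μ A + lapD μ Aᶜ := by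
    simp only [lapD]
    exact (Finset.sum_add_sum_compl A _).symm
  have hBc : Commute (casOp μ A) (lapD μ Aᶜ) := by
    rw [lapD]
    exact Commute.sum_right _ _ _
      (fun j hj => casOp_comm_Tsq μ A (Finset.mem_compl.mp hj))
  have h1 : (eulerOp A + gamA μ A • 1) * lapD μ A
      = lapD μ A * (eulerOp A + gamA μ A • 1) - 2 * lapD μ A := by
    have he := euler_lapD μ A
    rw [sub_eq_iff_eq_add] at he
    rw [add_mul, mul_add, smul_mul_assoc, one_mul, mul_smul_comm, mul_one, he,
      ← two_smul_end (lapD μ A)]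
    abel
  have h2 : lapD μ A * mulX2 A
      = mulX2 A * lapD μ A + 4 * (eulerOp A + gamA μ A • 1) := by
    have he := lapD_mulX2 μ A
    rw [sub_eq_iff_eq_add] at he
    rw [he, four_smul_end]
    abel
  have hmain := sl2_lemma (eulerOp A + gamA μ A • 1) (lapD μ A) (mulX2 A) h1 h2
  have hcas : casOp μ A = (1 / 4 : ℝ) • ((eulerOp A + gamA μ A • 1) ^ 2
      - 2 * (eulerOp A + gamA μ A • 1) - mulX2 A * lapD μ A) := by
    rw [casOp, two_smul_end]
  have hA : casOp μ A * lapD μ A - lapD μ A * casOp μ A = 0 := by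
    rw [hcas, smul_mul_assoc, mul_smul_comm, hmain, sub_self]
  calc casOp μ A * lapD μ Finset.univ - lapD μ Finset.univ * casOp μ A
      = (casOp μ A * lapD μ A - lapD μ A * casOp μ A)
        + (casOp μ A * lapD μ Aᶜ - lapD μ Aᶜ * casOp μ A) := by
        rw [hsplit]; noncomm_ring
    _ = 0 := by rw [hA, hBc.eq, sub_self, add_zero]

end Assemble

/-- the Casimir operator `C_A` commutes with the full Laplace–Dunkl
operator `Δ_{[n]}`. -/
theorem casOp_comm_lapD_univ {n : ℕ} (hn : 1 ≤ n) (μ : Fin n → ℝ) (hμ : ∀ i, 0 < μ i)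
    (A : Finset (Fin n)) :
    casOp μ A * lapD μ Finset.univ - lapD μ Finset.univ * casOp μ A = 0 :=
  casOp_comm_lapD_univ' μ A
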